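/- Let s ⊆ A × ω × ω be finite with every s_a a partial injection, fix a ∈ A, fix n ∈ ω with n ∉ dom(s_a), and let w be an a-good word of rank 1, i.e., w = a^{k} u where k ∈ ℤ \ {0} and u is a nonempty word not containing the letter a. Then for every finite set C ⊆ ω there are cofinitely many m ∈ ω such that for all l ∈ ω: e_w[s ∪ {(a,n,m)}](l) ∈ C if and only if e_w[s](l) is defined and lies in C. -/

import Mathlib

/-- A word (list of signed letters) is reduced: no adjacent pair `a aᵃ⁻¹`. -/
def Reduced {A : Type*} (l : List (A × Bool)) : Prop :=
  List.Chain' (fun x y => x.1 ≠ y.1 ∨ x.2 = y.2) l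

/-- The section `s_a ⊆ ω × ω` of `s ⊆ A × ω × ω`. -/
def sec {A : Type*} (s : Set (A × ℕ × ℕ)) (a : A) : Set (ℕ × ℕ) :=
  {p | (a, p.1, p.2) ∈ s}

/-- Inverse of a relation on ω. -/
def relInv (R : Set (ℕ × ℕ)) : Set (ℕ × ℕ) := {p | (p.2, p.1) ∈ R}

/-- Composition `R ∘ S` of relations on ω (`S` applied first). -/
def relComp (R S : Set (ℕ × ℕ)) : Set (ℕ × ℕ) :=
  {p | ∃ k, (p.1, k) ∈ S ∧ (k, p.2) ∈ R}

/-- `R` is (the graph of) a partial injection on ω. -/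
def IsPInj (R : Set (ℕ × ℕ)) : Prop :=
  (∀ n m m', (n, m) ∈ R → (n, m') ∈ R → m = m') ∧
  (∀ n n' m, (n, m) ∈ R → (n', m) ∈ R → n = n')

/-- Evaluation of a single signed letter. -/
def lit {A : Type*} (s : Set (A × ℕ × ℕ)) (x : A × Bool) : Set (ℕ × ℕ) :=
  if x.2 then sec s x.1 else relInv (sec s x.1)

/-- The evaluation `e_w[s]` of a word `w`, defined recursively by composition. -/
def eval {A : Type*} (s : Set (A × ℕ × ℕ)) : List (A × Bool) → Set (ℕ × ℕ)
  | [] => {p : ℕ × ℕ | p.1 = p.2}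
  | x :: l => relComp (lit s x) (eval s l)

/-- `w` is cyclically reduced (in `Ŵ_A`): nonempty, reduced, and either a power
of a single letter, or its first and last letters differ. -/
def CyclRed {A : Type*} (l : List (A × Bool)) : Prop :=
  l ≠ [] ∧ Reduced l ∧
    ((∃ c, ∀ x ∈ l, x = c) ∨
     (∃ x y, l.head? = some x ∧ l.getLast? = some y ∧ x.1 ≠ y.1))

-- aux
def relDom (R : Set (ℕ × ℕ)) : Set ℕ := {x | ∃ y, (x, y) ∈ R}
def relRan (R : Set (ℕ × ℕ)) : Set ℕ := {y | ∃ x, (x, y) ∈ R}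

lemma lit_mono {A : Type*} {s s' : Set (A × ℕ × ℕ)} (h : s ⊆ s') (x : A × Bool) :
    lit s x ⊆ lit s' x := by
  rcases x with ⟨c, b⟩
  cases b <;> simp only [lit, sec, relInv] <;> intro p hp <;> exact h hp

lemma eval_mono {A : Type*} {s s' : Set (A × ℕ × ℕ)} (h : s ⊆ s') :
    ∀ w, eval s w ⊆ eval s' w := by
  intro w
  induction w with
  | nil => exact subset_rfl
  | cons x l ih =>
    rintro ⟨p, q⟩ ⟨k, hk1, hk2⟩
    exact ⟨k, ih hk1, lit_mono h x hk2⟩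

lemma sec_insert_ne {A : Type*} (s : Set (A × ℕ × ℕ)) (a c : A) (n m : ℕ)
    (h : c ≠ a) : sec (insert (a, n, m) s) c = sec s c := by
  ext p
  simp only [sec, Set.mem_insert_iff, Set.mem_setOf_eq, Prod.mk.injEq]
  constructor
  · rintro (⟨rfl, _⟩ | hp)
    · exact absurd rfl h
    · exact hp
  · exact fun hp => Or.inr hp

lemma eval_insert_avoid {A : Type*} (s : Set (A × ℕ × ℕ)) (a : A) (n m : ℕ)
    (u : List (A × Bool)) (hua : ∀ x ∈ u, x.1 ≠ a) :
    eval (insert (a, n, m) s) u = eval s u := by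
  induction u with
  | nil => rfl
  | cons x l ih =>
    have hx : x.1 ≠ a := hua x (by simp)
    have hl : ∀ y ∈ l, y.1 ≠ a := fun y hy => hua y (by simp [hy])
    have hlit : lit (insert (a, n, m) s) x = lit s x := by
      rcases x with ⟨c, b⟩
      cases b <;> simp only [lit, relInv] <;> rw [sec_insert_ne s a c n m hx]
    simp only [eval, ih hl, hlit]

lemma mem_eval_append {A : Type*} (s : Set (A × ℕ × ℕ)) (w1 w2 : List (A × Bool))
    (p q : ℕ) : (p, q) ∈ eval s (w1 ++ w2) ↔
      ∃ k, (p, k) ∈ eval s w2 ∧ (k, q) ∈ eval s w1 := by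
  induction w1 generalizing q with
  | nil =>
    constructor
    · intro h; exact ⟨q, h, rfl⟩
    · rintro ⟨k, hk, hkq⟩
      have : k = q := hkq
      subst this; exact hk
  | cons x l ih =>
    constructor
    · rintro ⟨k, hk, hkq⟩
      obtain ⟨k', hk1, hk2⟩ := (ih k).mp hk
      exact ⟨k', hk1, k, hk2, hkq⟩
    · rintro ⟨k', hk1, k, hk2, hkq⟩
      exact ⟨k, (ih k).mpr ⟨k', hk1, hk2⟩, hkq⟩

lemma sec_insert_same {A : Type*} (s : Set (A × ℕ × ℕ)) (a : A) (n m : ℕ) :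
    sec (insert (a, n, m) s) a = insert (n, m) (sec s a) := by
  ext ⟨p, q⟩
  simp [sec, Prod.ext_iff]

lemma eval_rep_true {A : Type*} (s : Set (A × ℕ × ℕ)) (a : A) (n m : ℕ)
    (hdom : m ∉ relDom (sec s a)) (hmn : m ≠ n) :
    ∀ j k c, (k, c) ∈ eval (insert (a, n, m) s) (List.replicate j (a, true)) →
      (k, c) ∈ eval s (List.replicate j (a, true)) ∨ c = m := by
  intro j
  induction j with
  | zero => intro k c h; exact Or.inl h
  | succ i ih =>
    intro k c h
    rw [List.replicate_succ] at h ⊢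
    obtain ⟨k', hk', hkc⟩ := h
    simp only [lit, if_pos rfl, sec_insert_same, Set.mem_insert_iff, Prod.mk.injEq] at hkc
    rcases hkc with ⟨_, rfl⟩ | hkc
    · exact Or.inr rfl
    · rcases ih k k' hk' with h1 | rfl
      · exact Or.inl ⟨k', h1, by simpa [lit] using hkc⟩
      · exact absurd ⟨c, hkc⟩ hdom

lemma eval_rep_false_ran {A : Type*} (s : Set (A × ℕ × ℕ)) (a : A) (m : ℕ)
    (hdom : m ∉ relDom (sec s a)) :
    ∀ j k, (k, m) ∈ eval s (List.replicate j (a, false)) → k = m := by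
  intro j
  induction j with
  | zero => intro k h; exact h
  | succ i _ =>
    intro k h
    rw [List.replicate_succ] at h
    obtain ⟨k', _, hkm⟩ := h
    simp only [lit, relInv, Set.mem_setOf_eq] at hkm
    rw [if_neg (by simp : ¬((a, false).2 = true))] at hkm
    exact absurd ⟨k', hkm⟩ hdom

lemma eval_rep_false {A : Type*} (s : Set (A × ℕ × ℕ)) (a : A) (n m : ℕ)
    (hdom : m ∉ relDom (sec s a)) (hmn : m ≠ n) :
    ∀ j k c, (k, c) ∈ eval (insert (a, n, m) s) (List.replicate j (a, false)) →
      (k, c) ∈ eval s (List.replicate j (a, false)) ∨ k = m := by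
  intro j
  induction j with
  | zero => intro k c h; exact Or.inl h
  | succ i ih =>
    intro k c h
    rw [List.replicate_succ] at h ⊢
    obtain ⟨k', hk', hkc⟩ := h
    simp only [lit, sec_insert_same] at hkc
    rw [if_neg (by simp : ¬((a, false).2 = true))] at hkc
    simp only [relInv, Set.mem_setOf_eq, Set.mem_insert_iff, Prod.mk.injEq] at hkc
    rcases ih k k' hk' with h1 | hk1
    · rcases hkc with ⟨hc, hk2⟩ | hkc
      · exact Or.inr (eval_rep_false_ran s a m hdom i k (hk2 ▸ h1))
      · refine Or.inl ⟨k', h1, ?_⟩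
        simp only [lit, relInv, Set.mem_setOf_eq]
        rw [if_neg (by simp : ¬((a, false).2 = true))]
        exact hkc
    · exact Or.inr hk1

lemma sec_finite {A : Type*} {s : Set (A × ℕ × ℕ)} (hfin : s.Finite) (a : A) :
    (sec s a).Finite := by
  apply (hfin.image Prod.snd).subset
  rintro ⟨p, q⟩ hp
  exact ⟨(a, p, q), hp, rfl⟩

lemma relDom_finite {R : Set (ℕ × ℕ)} (h : R.Finite) : (relDom R).Finite := by
  apply (h.image Prod.fst).subset
  rintro x ⟨y, hy⟩
  exact ⟨(x, y), hy, rfl⟩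

lemma relRan_finite {R : Set (ℕ × ℕ)} (h : R.Finite) : (relRan R).Finite := by
  apply (h.image Prod.snd).subset
  rintro y ⟨x, hx⟩
  exact ⟨(x, y), hx, rfl⟩

lemma lit_finite {A : Type*} {s : Set (A × ℕ × ℕ)} (hfin : s.Finite) (x : A × Bool) :
    (lit s x).Finite := by
  rcases x with ⟨c, b⟩
  cases b
  · apply ((sec_finite hfin c).image Prod.swap).subset
    rintro ⟨p, q⟩ hp
    exact ⟨(q, p), hp, rfl⟩
  · simpa [lit] using sec_finite hfin c

lemma relRan_eval_finite {A : Type*} {s : Set (A × ℕ × ℕ)} (hfin : s.Finite)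
    (x : A × Bool) (l : List (A × Bool)) :
    (relRan (eval s (x :: l))).Finite := by
  apply (relRan_finite (lit_finite hfin x)).subset
  rintro c ⟨k, k', _, hk⟩
  exact ⟨k', hk⟩

/-- Lemma 2.9 for `a`-good words of rank 1: `w = a^k u` with `u` nonempty,
avoiding `a`. For `n ∉ dom(s_a)` and finite `C ⊆ ω`, for cofinitely many `m`,
`e_w[s ∪ {(a,n,m)}](l) ∈ C` iff `e_w[s](l)` is defined and lies in `C`. -/
theorem stmt6 {A : Type*} (s : Set (A × ℕ × ℕ)) (hfin : s.Finite)
    (hs : ∀ a, IsPInj (sec s a)) (a : A) (n : ℕ)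
    (hn : ∀ m, (a, n, m) ∉ s)
    (j : ℕ) (hj : 1 ≤ j) (b : Bool) (u : List (A × Bool)) (hu : u ≠ [])
    (hured : Reduced u) (hua : ∀ x ∈ u, x.1 ≠ a)
    (w : List (A × Bool)) (hw : w = List.replicate j (a, b) ++ u)
    (C : Set ℕ) (hC : C.Finite) :
    ∀ᶠ m in Filter.cofinite, ∀ l : ℕ,
      ((∃ c ∈ C, (l, c) ∈ eval (insert (a, n, m) s) w) ↔
        ∃ c ∈ C, (l, c) ∈ eval s w) := by
  subst hw
  have hranfin : (relRan (eval s u)).Finite := by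
    cases u with
    | nil => exact absurd rfl hu
    | cons x l => exact relRan_eval_finite hfin x l
  have hbad : (C ∪ {n} ∪ relDom (sec s a) ∪ relRan (eval s u)).Finite :=
    ((hC.union (Set.finite_singleton n)).union
      (relDom_finite (sec_finite hfin a))).union hranfin
  filter_upwards [hbad.eventually_cofinite_notMem] with m hm
  have hmC : m ∉ C := fun h => hm (Or.inl (Or.inl (Or.inl h)))
  have hmn : m ≠ n := fun h => hm (Or.inl (Or.inl (Or.inr h)))
  have hmd : m ∉ relDom (sec s a) := fun h => hm (Or.inl (Or.inr h))
  have hmr : m ∉ relRan (eval s u) := fun h => hm (Or.inr h)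
  intro l
  constructor
  · rintro ⟨c, hc, hlc⟩
    rw [mem_eval_append] at hlc
    obtain ⟨k, hk1, hk2⟩ := hlc
    rw [eval_insert_avoid s a n m u hua] at hk1
    refine ⟨c, hc, (mem_eval_append s _ u l c).mpr ⟨k, hk1, ?_⟩⟩
    cases b
    · rcases eval_rep_false s a n m hmd hmn j k c hk2 with h | hk
      · exact h
      · exact absurd ⟨l, hk ▸ hk1⟩ hmr
    · rcases eval_rep_true s a n m hmd hmn j k c hk2 with h | hc'
      · exact h
      · exact absurd (hc' ▸ hc) hmC
  · rintro ⟨c, hc, hlc⟩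
    exact ⟨c, hc, eval_mono (Set.subset_insert _ _) _ hlc⟩
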